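/- Fix u ≠ v in X and assume the paths are indexed so that d(P_1,{u,v}) ≤ d(P_2,{u,v}) ≤ … ≤ d(P_k,{u,v}), where d(P,{u,v}) = min(min_{p∈P} d(u,p), min_{p∈P} d(v,p)). Then for every s ∈ {1,…,k} and every level i ∈ {0,…,m−1}, the probability over the random choices (σ, α, β) that P_s cuts {u,v} vertically at level i is at most (1/s)·d(u,v)/2^{i−2}. -/

import Mathlib

open Set

noncomputable section

variable {X : Type} [MetricSpace X] [Fintype X]

/-- `nbr Q δ` is the `δ`-neighborhood `N(Q,δ) = {x : min_{p ∈ Q} d x p ≤ δ}` of `Q`. -/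
def nbr (Q : Set X) (δ : ℝ) : Set X := {x | ∃ p ∈ Q, dist x p ≤ δ}

/-- The horizontal child `A_s = (A ∩ N(P_{σ s}, β·2^{i-2})) \ ⋃_{t<s} A_t` of a cluster `A`
at scale `i` (note `2 ^ i / 4 = 2^{i-2}`, and `⋃_{t<s} A_t = ⋃_{t<s} (A ∩ N(P_{σ t}, β·2^{i-2}))`). -/
def hchild {k : ℕ} (P : Fin k → Set X) (σ : Equiv.Perm (Fin k)) (β : ℝ)
    (A : Set X) (i : ℕ) (s : Fin k) : Set X :=
  (A ∩ nbr (P (σ s)) (β * (2 ^ i / 4))) \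
    ⋃ t, ⋃ (_ : t < s), A ∩ nbr (P (σ t)) (β * (2 ^ i / 4))

/-- The vertical child `A_{s,j}` of a cluster `A` at scale `i`:
the part of the horizontal child `A_s` with `(j-1+α)·2^{i-2} ≤ d r x < (j+α)·2^{i-2}`. -/
def vchild {k : ℕ} (r : X) (P : Fin k → Set X) (σ : Equiv.Perm (Fin k)) (α β : ℝ)
    (A : Set X) (i : ℕ) (s : Fin k) (j : ℕ) : Set X :=
  {x ∈ hchild P σ β A i s |
    ((j : ℝ) - 1 + α) * (2 ^ i / 4) ≤ dist r x ∧ dist r x < ((j : ℝ) + α) * (2 ^ i / 4)}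

/-- Clusters of the alternating partitions together with (the indices of) their trunks,
defined top-down: `partsTAux … n` is the partition `C (m - n)`.  At the top
`C m = {univ}` with trunk `P (σ 0)`; the clusters of `C i` are the nonempty vertical
children `A_{s,j}` (with trunk `P (σ s)`) of clusters `A ∈ C (i+1)`. -/
def partsTAux {k : ℕ} (hk : 0 < k) (r : X) (P : Fin k → Set X) (σ : Equiv.Perm (Fin k))
    (α β : ℝ) (m : ℕ) : ℕ → Set (Set X × Fin k)
  | 0 => {(Set.univ, σ ⟨0, hk⟩)}
  | n + 1 =>
      {Bl | Bl.1.Nonempty ∧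
        ∃ A : Set X, (∃ l, (A, l) ∈ partsTAux hk r P σ α β m n) ∧
          ∃ s : Fin k, ∃ j : ℕ,
            Bl.1 = vchild r P σ α β A (m - (n + 1)) s j ∧ Bl.2 = σ s}

/-- The alternating partition `C i` with trunk indices: `(A, l) ∈ partsT hk r P σ α β m i`
means that `A` is a cluster of `C i` whose trunk is the path `P l`. -/
def partsT {k : ℕ} (hk : 0 < k) (r : X) (P : Fin k → Set X) (σ : Equiv.Perm (Fin k))
    (α β : ℝ) (m i : ℕ) : Set (Set X × Fin k) :=
  partsTAux hk r P σ α β m (m - i)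

/-- The alternating partition `C i`. -/
def parts {k : ℕ} (hk : 0 < k) (r : X) (P : Fin k → Set X) (σ : Equiv.Perm (Fin k))
    (α β : ℝ) (m i : ℕ) : Set (Set X) :=
  {A | ∃ l, (A, l) ∈ partsT hk r P σ α β m i}

/-- `TrunkOf … i x l`: the path `P l` is the trunk of the cluster `C i (x)` of `C i`
containing `x`. -/
def TrunkOf {k : ℕ} (hk : 0 < k) (r : X) (P : Fin k → Set X) (σ : Equiv.Perm (Fin k))
    (α β : ℝ) (m i : ℕ) (x : X) (l : Fin k) : Prop :=
  ∃ A : Set X, (A, l) ∈ partsT hk r P σ α β m i ∧ x ∈ A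

/-- `u` and `v` lie in the same cluster of `C i`. -/
def SameCluster {k : ℕ} (hk : 0 < k) (r : X) (P : Fin k → Set X) (σ : Equiv.Perm (Fin k))
    (α β : ℝ) (m i : ℕ) (u v : X) : Prop :=
  ∃ A ∈ parts hk r P σ α β m i, u ∈ A ∧ v ∈ A

/-- `P s` settles `{u,v}` at level `i`: `u` and `v` are in the same cluster of `C (i+1)`,
and `P s` is the first path in the order `σ 0, σ 1, …` that is the trunk of at least one
of `C i (u)`, `C i (v)`. -/
def Settles {k : ℕ} (hk : 0 < k) (r : X) (P : Fin k → Set X) (σ : Equiv.Perm (Fin k))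
    (α β : ℝ) (m : ℕ) (s : Fin k) (i : ℕ) (u v : X) : Prop :=
  SameCluster hk r P σ α β m (i + 1) u v ∧
    ∃ s' : Fin k, σ s' = s ∧
      (TrunkOf hk r P σ α β m i u (σ s') ∨ TrunkOf hk r P σ α β m i v (σ s')) ∧
      ∀ t' : Fin k, t' < s' →
        ¬(TrunkOf hk r P σ α β m i u (σ t') ∨ TrunkOf hk r P σ α β m i v (σ t'))

/-- `P s` cuts `{u,v}` horizontally at level `i`: it settles `{u,v}` at level `i` and is
the trunk of exactly one of `C i (u)`, `C i (v)`. -/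
def CutsH {k : ℕ} (hk : 0 < k) (r : X) (P : Fin k → Set X) (σ : Equiv.Perm (Fin k))
    (α β : ℝ) (m : ℕ) (s : Fin k) (i : ℕ) (u v : X) : Prop :=
  Settles hk r P σ α β m s i u v ∧
    Xor' (TrunkOf hk r P σ α β m i u s) (TrunkOf hk r P σ α β m i v s)

/-- `P s` cuts `{u,v}` vertically at level `i`: `u` and `v` lie in the same cluster `A`
of `C (i+1)` and in the same horizontal child of `A`, whose trunk is `P s`, and
`C i (u) ≠ C i (v)`. -/
def CutsV {k : ℕ} (hk : 0 < k) (r : X) (P : Fin k → Set X) (σ : Equiv.Perm (Fin k))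
    (α β : ℝ) (m : ℕ) (s : Fin k) (i : ℕ) (u v : X) : Prop :=
  (∃ A ∈ parts hk r P σ α β m (i + 1), u ∈ A ∧ v ∈ A ∧
      ∃ s' : Fin k, σ s' = s ∧ u ∈ hchild P σ β A i s' ∧ v ∈ hchild P σ β A i s') ∧
    ¬SameCluster hk r P σ α β m i u v

open MeasureTheory in
/-- The probability, over a uniformly random permutation `σ` of `{1,…,k}`, a uniform
`α ∈ [0,1)` and a uniform `β ∈ [1,2)` (independent), that `P s` cuts `{u,v}` horizontally
at level `i` (note both `[0,1)` and `[1,2)` have Lebesgue measure `1`). -/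
def PrCutH {k : ℕ} (hk : 0 < k) (r : X) (P : Fin k → Set X) (m : ℕ)
    (s : Fin k) (i : ℕ) (u v : X) : ℝ :=
  (∑ σ : Equiv.Perm (Fin k),
      (volume {p : ℝ × ℝ | p.1 ∈ Set.Ico (0 : ℝ) 1 ∧ p.2 ∈ Set.Ico (1 : ℝ) 2 ∧
        CutsH hk r P σ p.1 p.2 m s i u v}).toReal) /
    (Fintype.card (Equiv.Perm (Fin k)))

open MeasureTheory in
/-- The probability, over a uniformly random permutation `σ` of `{1,…,k}`, a uniform
`α ∈ [0,1)` and a uniform `β ∈ [1,2)` (independent), that `P s` cuts `{u,v}` vertically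
at level `i`. -/
def PrCutV {k : ℕ} (hk : 0 < k) (r : X) (P : Fin k → Set X) (m : ℕ)
    (s : Fin k) (i : ℕ) (u v : X) : ℝ :=
  (∑ σ : Equiv.Perm (Fin k),
      (volume {p : ℝ × ℝ | p.1 ∈ Set.Ico (0 : ℝ) 1 ∧ p.2 ∈ Set.Ico (1 : ℝ) 2 ∧
        CutsV hk r P σ p.1 p.2 m s i u v}).toReal) /
    (Fintype.card (Equiv.Perm (Fin k)))

section Aux
open MeasureTheory

-- measure lemma
lemma fract_measure (a b : ℝ) (hab : a ≤ b) :
    volume {α : ℝ | α ∈ Ico (0:ℝ) 1 ∧ ∃ n : ℤ, a < n + α ∧ n + α ≤ b} ≤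
      ENNReal.ofReal (b - a) := by
  by_cases hL : 1 ≤ b - a
  · calc volume {α : ℝ | α ∈ Ico (0:ℝ) 1 ∧ ∃ n : ℤ, a < n + α ∧ n + α ≤ b}
        ≤ volume (Ico (0:ℝ) 1) := measure_mono (fun x hx => hx.1)
      _ = ENNReal.ofReal 1 := by simp [Real.volume_Ico]
      _ ≤ ENNReal.ofReal (b - a) := ENNReal.ofReal_le_ofReal hL
  push_neg at hL
  set L := b - a with hLdef
  set c := Int.fract a with hc
  have hc0 : 0 ≤ c := Int.fract_nonneg a
  have hc1 : c < 1 := Int.fract_lt_one a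
  have hsub : {α : ℝ | α ∈ Ico (0:ℝ) 1 ∧ ∃ n : ℤ, a < n + α ∧ n + α ≤ b} ⊆
      Ioc c (min (c + L) 1) ∪ Icc 0 (c - 1 + L) := by
    rintro α ⟨⟨hα0, hα1⟩, n, h1, h2⟩
    set θ : ℝ := n + α - a with hθ
    have hθ0 : 0 < θ := by simp [hθ]; linarith
    have hθL : θ ≤ L := by simp [hθ, hLdef]; linarith
    have hαeq : α = c + θ - (n - ⌊a⌋) := by
      have := Int.fract_add_floor a  -- maybe wrong name
      push_cast [hc, Int.fract]
      ring
    have hq1 : ((n - ⌊a⌋ : ℤ) : ℝ) > c + θ - 1 := by push_cast at hαeq ⊢; linarith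
    have hq2 : ((n - ⌊a⌋ : ℤ) : ℝ) ≤ c + θ := by push_cast at hαeq ⊢; linarith
    have hqcases : n - ⌊a⌋ = 0 ∨ n - ⌊a⌋ = 1 := by
      have hlo : ((-1 : ℤ) : ℝ) < ((n - ⌊a⌋ : ℤ) : ℝ) := by push_cast; push_cast at hq1; linarith
      have hhi : ((n - ⌊a⌋ : ℤ) : ℝ) < ((2 : ℤ) : ℝ) := by push_cast; push_cast at hq2; linarith
      have h1' : (-1:ℤ) < n - ⌊a⌋ := by exact_mod_cast hlo
      have h2' : (n - ⌊a⌋:ℤ) < 2 := by exact_mod_cast hhi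
      omega
    rcases hqcases with hq | hq
    · left
      have hz : ((n - ⌊a⌋ : ℤ) : ℝ) = 0 := by rw [hq]; simp
      push_cast at hz hαeq
      constructor
      · linarith
      · exact le_min (by linarith) (le_of_lt hα1)
    · right
      have hz : ((n - ⌊a⌋ : ℤ) : ℝ) = 1 := by rw [hq]; simp
      push_cast at hz hαeq
      exact ⟨hα0, by linarith⟩
  calc volume {α : ℝ | α ∈ Ico (0:ℝ) 1 ∧ ∃ n : ℤ, a < n + α ∧ n + α ≤ b}
      ≤ volume (Ioc c (min (c + L) 1) ∪ Icc 0 (c - 1 + L)) := measure_mono hsub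
    _ ≤ volume (Ioc c (min (c + L) 1)) + volume (Icc 0 (c - 1 + L)) := measure_union_le _ _
    _ ≤ ENNReal.ofReal L := by
        rw [Real.volume_Ioc, Real.volume_Icc]
        rcases le_or_gt (c + L) 1 with h | h
        · rw [min_eq_left h]
          have : c - 1 + L ≤ 0 := by linarith
          simp [ENNReal.ofReal_eq_zero.2 this]
        · rw [min_eq_right h.le]
          rw [← ENNReal.ofReal_add (by linarith) (by linarith)]
          exact ENNReal.ofReal_le_ofReal (by ring_nf; linarith)

lemma perm_count {k : ℕ} (s : Fin k) :
    (Finset.Iic s).card *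
      (Finset.univ.filter (fun σ : Equiv.Perm (Fin k) =>
        ∀ t, t < s → σ.symm s < σ.symm t)).card ≤ Fintype.card (Equiv.Perm (Fin k)) := by
  classical
  set G := Finset.univ.filter (fun σ : Equiv.Perm (Fin k) =>
        ∀ t, t < s → σ.symm s < σ.symm t) with hG
  have key : ((Finset.Iic s) ×ˢ G).card ≤ (Finset.univ : Finset (Equiv.Perm (Fin k))).card := by
    apply Finset.card_le_card_of_injOn (fun p => Equiv.swap s p.1 * p.2)
    · intro p _; exact Finset.mem_univ _
    · rintro ⟨t₁, σ₁⟩ h₁ ⟨t₂, σ₂⟩ h₂ heq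
      obtain ⟨ht₁, hg₁⟩ := Finset.mem_product.mp h₁
      obtain ⟨ht₂, hg₂⟩ := Finset.mem_product.mp h₂
      rw [Finset.mem_Iic] at ht₁ ht₂
      rw [hG, Finset.mem_filter] at hg₁ hg₂
      have hσ₁ := hg₁.2
      have hσ₂ := hg₂.2
      simp only at heq
      -- argmin characterization: for σ' = swap s t * σ with σ ∈ G,
      -- t is the unique minimizer of σ'.symm on Iic s
      have argmin : ∀ (t : Fin k) (σ : Equiv.Perm (Fin k)), t ≤ s →
          (∀ x, x < s → σ.symm s < σ.symm x) →
          ∀ t'' , t'' ≤ s → t'' ≠ t →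
            (Equiv.swap s t * σ).symm t < (Equiv.swap s t * σ).symm t'' := by
        intro t σ ht hσ t'' ht'' hne
        have e : ∀ y, (Equiv.swap s t * σ).symm y = σ.symm (Equiv.swap s t y) := by
          intro y; simp [Equiv.Perm.mul_def, Equiv.symm_trans_apply]
        rw [e, e, Equiv.swap_apply_right]
        have hx : Equiv.swap s t t'' ≤ s ∧ Equiv.swap s t t'' ≠ s := by
          rcases eq_or_ne t'' s with rfl | hns
          · rw [Equiv.swap_apply_left]
            exact ⟨ht, fun h => hne h.symm⟩
          · rw [Equiv.swap_apply_of_ne_of_ne hns hne]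
            exact ⟨ht'', hns⟩
        exact hσ _ (lt_of_le_of_ne hx.1 hx.2)
      have hteq : t₁ = t₂ := by
        by_contra hne
        have h12 := argmin t₁ σ₁ ht₁ hσ₁ t₂ ht₂ (Ne.symm hne)
        have h21 := argmin t₂ σ₂ ht₂ hσ₂ t₁ ht₁ hne
        rw [heq] at h12
        exact absurd (h12.trans h21) (lt_irrefl _)
      subst hteq
      have : σ₁ = σ₂ := by
        have := heq
        exact mul_left_cancel this
      simp [this]
  rw [Finset.card_product] at key
  simpa [Finset.card_univ] using key

-- Lemma: CutsV forces σ to put s first among {0,…,s}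
lemma cutsV_perm {k : ℕ} (hk : 0 < k) (r : X) (P : Fin k → Set X)
    (σ : Equiv.Perm (Fin k)) (α β : ℝ) (m : ℕ) (s : Fin k) (i : ℕ) (u v : X)
    (hr : ∀ s, r ∈ P s)
    (hord : ∀ s t : Fin k, s ≤ t →
      sInf ((fun p => min (dist u p) (dist v p)) '' P s) ≤
        sInf ((fun p => min (dist u p) (dist v p)) '' P t))
    (h : CutsV hk r P σ α β m s i u v) :
    ∀ t, t < s → σ.symm s < σ.symm t := by
  obtain ⟨⟨A, hA, hu, hv, s', hσs', hu', hv'⟩, _⟩ := h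
  intro t ht
  have hss' : σ.symm s = s' := by rw [← hσs']; simp
  rw [hss']
  set δ := β * (2 ^ i / 4) with hδ
  -- u is within δ of P s
  have hunbr : ∃ p ∈ P s, dist u p ≤ δ := by
    obtain ⟨p, hp, hdp⟩ := hu'.1.2
    exact ⟨p, by rwa [hσs'] at hp, hdp⟩
  -- hence sInf for P s ≤ δ, hence for P t ≤ δ
  have hbdd : ∀ (Q : Set X), BddBelow ((fun p => min (dist u p) (dist v p)) '' Q) := by
    intro Q
    exact ⟨0, by rintro x ⟨p, _, rfl⟩; exact le_min dist_nonneg dist_nonneg⟩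
  have hsInfs : sInf ((fun p => min (dist u p) (dist v p)) '' P s) ≤ δ := by
    obtain ⟨p, hp, hdp⟩ := hunbr
    calc sInf _ ≤ min (dist u p) (dist v p) := csInf_le (hbdd _) ⟨p, hp, rfl⟩
      _ ≤ dist u p := min_le_left _ _
      _ ≤ δ := hdp
  have hsInft : sInf ((fun p => min (dist u p) (dist v p)) '' P t) ≤ δ :=
    le_trans (hord t s ht.le) hsInfs
  -- sInf is attained since the image is finite and nonempty
  have hfin : ((fun p => min (dist u p) (dist v p)) '' P t).Finite :=
    (Set.toFinite (P t)).image _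
  have hne : ((fun p => min (dist u p) (dist v p)) '' P t).Nonempty :=
    ⟨_, ⟨r, hr t, rfl⟩⟩
  have hmem := hne.csInf_mem hfin
  obtain ⟨p, hp, hpe⟩ := hmem
  simp only at hpe
  rw [← hpe] at hsInft
  -- so u or v is in nbr (P t) δ
  have hnbr : u ∈ nbr (P t) δ ∨ v ∈ nbr (P t) δ := by
    rcases le_total (dist u p) (dist v p) with hc | hc
    · left; exact ⟨p, hp, by rwa [min_eq_left hc] at hsInft⟩
    · right; exact ⟨p, hp, by rwa [min_eq_right hc] at hsInft⟩
  -- now if σ.symm t < s', u (or v) would be excluded from the hchild at s'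
  by_contra hlt
  push_neg at hlt
  have hne' : σ.symm t ≠ s' := by
    intro h
    apply ht.ne
    rw [← hσs', ← h]; simp
  have hlt' : σ.symm t < s' := lt_of_le_of_ne hlt hne'
  have hσt : σ (σ.symm t) = t := by simp
  rcases hnbr with hn | hn
  · exact hu'.2 (Set.mem_iUnion.2 ⟨σ.symm t, Set.mem_iUnion.2 ⟨hlt', hu, by rwa [hσt]⟩⟩)
  · exact hv'.2 (Set.mem_iUnion.2 ⟨σ.symm t, Set.mem_iUnion.2 ⟨hlt', hv, by rwa [hσt]⟩⟩)

-- Lemma: CutsV forces a vertical threshold crossing between dist r u and dist r v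
lemma cutsV_alpha {k : ℕ} (hk : 0 < k) (r : X) (P : Fin k → Set X)
    (σ : Equiv.Perm (Fin k)) (α β : ℝ) (m : ℕ) (s : Fin k) (i : ℕ) (u v : X)
    (hi : i < m) (hα0 : 0 ≤ α) (hα1 : α < 1)
    (h : CutsV hk r P σ α β m s i u v) :
    ∃ n : ℤ, min (dist r u) (dist r v) / (2 ^ i / 4) < n + α ∧
      (n : ℝ) + α ≤ max (dist r u) (dist r v) / (2 ^ i / 4) := by
  obtain ⟨⟨A, hA, hu, hv, s', hσs', hu', hv'⟩, hnot⟩ := h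
  set δ : ℝ := 2 ^ i / 4 with hδ
  have hδpos : 0 < δ := by positivity
  -- the unique vertical index for a point
  set J : X → ℕ := fun x => (⌊dist r x / δ - α⌋ + 1).toNat with hJ
  have hJspec : ∀ x, ((J x : ℝ) - 1 + α) * δ ≤ dist r x ∧ dist r x < ((J x : ℝ) + α) * δ := by
    intro x
    have hge : (-1 : ℤ) ≤ ⌊dist r x / δ - α⌋ := by
      apply Int.le_floor.2
      push_cast
      have : (0:ℝ) ≤ dist r x / δ := div_nonneg dist_nonneg hδpos.le
      linarith
    have hcast : ((J x : ℕ) : ℝ) = (⌊dist r x / δ - α⌋ : ℝ) + 1 := by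
      have hnn : (0:ℤ) ≤ ⌊dist r x / δ - α⌋ + 1 := by omega
      rw [hJ]
      simp only
      rw [← Int.cast_natCast (R := ℝ), Int.toNat_of_nonneg hnn]
      push_cast; ring
    have h1 := Int.floor_le (dist r x / δ - α)
    have h2 := Int.lt_floor_add_one (dist r x / δ - α)
    constructor
    · rw [hcast]
      rw [← le_div_iff₀ hδpos]
      linarith
    · rw [hcast]
      rw [← div_lt_iff₀ hδpos]
      linarith
  -- each point of the hchild is in its vchild, which is a cluster of C i
  have hvc : ∀ x ∈ hchild P σ β A i s', x ∈ vchild r P σ α β A i s' (J x) := by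
    intro x hx
    exact ⟨hx, (hJspec x).1, (hJspec x).2⟩
  have hcluster : ∀ j : ℕ, (vchild r P σ α β A i s' j).Nonempty →
      vchild r P σ α β A i s' j ∈ parts hk r P σ α β m i := by
    intro j hne
    obtain ⟨l, hl⟩ := hA
    refine ⟨σ s', ?_⟩
    unfold partsT at hl ⊢
    have e1 : m - i = (m - (i + 1)) + 1 := by omega
    rw [e1]
    show _ ∈ partsTAux hk r P σ α β m ((m - (i+1)) + 1)
    rw [partsTAux]
    refine ⟨hne, A, ⟨l, hl⟩, s', j, ?_, rfl⟩
    have e2 : m - ((m - (i + 1)) + 1) = i := by omega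
    rw [e2]
  -- if J u = J v then they'd be in the same cluster of C i
  have hJne : J u ≠ J v := by
    intro he
    apply hnot
    refine ⟨vchild r P σ α β A i s' (J u), hcluster _ ⟨u, hvc u hu'⟩, hvc u hu', ?_⟩
    rw [he]; exact hvc v hv'
  -- threshold crossing
  rcases lt_or_gt_of_ne hJne with hlt | hlt
  · -- J u < J v : dist r u < (J u + α) δ ≤ (J v - 1 + α) δ ≤ dist r v
    have h1 := (hJspec u).2
    have h2 := (hJspec v).1
    have hmono : ((J u : ℝ) + α) * δ ≤ ((J v : ℝ) - 1 + α) * δ := by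
      have : (J u : ℝ) ≤ (J v : ℝ) - 1 := by
        have : (J u : ℝ) + 1 ≤ (J v : ℝ) := by exact_mod_cast hlt
        linarith
      nlinarith [hδpos]
    have hduv : dist r u < dist r v := lt_of_lt_of_le h1 (hmono.trans h2)
    refine ⟨(J u : ℤ), ?_, ?_⟩
    · rw [min_eq_left hduv.le]
      rw [div_lt_iff₀ hδpos]
      push_cast
      linarith [h1]
    · rw [max_eq_right hduv.le]
      rw [le_div_iff₀ hδpos]
      push_cast
      nlinarith [hmono.trans h2]
  · have h1 := (hJspec v).2
    have h2 := (hJspec u).1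
    have hmono : ((J v : ℝ) + α) * δ ≤ ((J u : ℝ) - 1 + α) * δ := by
      have : (J v : ℝ) ≤ (J u : ℝ) - 1 := by
        have : (J v : ℝ) + 1 ≤ (J u : ℝ) := by exact_mod_cast hlt
        linarith
      nlinarith [hδpos]
    have hduv : dist r v < dist r u := lt_of_lt_of_le h1 (hmono.trans h2)
    refine ⟨(J v : ℤ), ?_, ?_⟩
    · rw [min_eq_right hduv.le]
      rw [div_lt_iff₀ hδpos]
      push_cast
      linarith [h1]
    · rw [max_eq_left hduv.le]
      rw [le_div_iff₀ hδpos]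
      push_cast
      nlinarith [hmono.trans h2]


end Aux

open MeasureTheory

/-- Fix `u ≠ v` and assume the paths are indexed so that
`d(P_1,{u,v}) ≤ … ≤ d(P_k,{u,v})`.  Then for every `s` and every level `i ∈ {0,…,m-1}`,
the probability over `(σ, α, β)` that `P s` cuts `{u,v}` vertically at level `i` is
at most `(1/s) · d u v / 2^(i-2)`. -/
theorem statement12 {k : ℕ} (hk : 0 < k) (r : X) (P : Fin k → Set X) (m : ℕ)
    (hr : ∀ s, r ∈ P s) (hcov : (⋃ s, P s) = Set.univ)
    (hpath : ∀ s, ∀ x ∈ P s, ∀ y ∈ P s, dist x y = |dist r x - dist r y|)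
    (hmin : ∀ x y : X, x ≠ y → 1 ≤ dist x y)
    (hm : (m : ℤ) = 2 + ⌈Real.logb 2 (Metric.diam (Set.univ : Set X))⌉)
    (u v : X) (huv : u ≠ v)
    (hord : ∀ s t : Fin k, s ≤ t →
      sInf ((fun p => min (dist u p) (dist v p)) '' P s) ≤
        sInf ((fun p => min (dist u p) (dist v p)) '' P t)) :
    ∀ (s : Fin k) (i : ℕ), i < m →
      PrCutV hk r P m s i u v ≤
        (1 / ((s : ℕ) + 1 : ℝ)) * (dist u v / (2 ^ i / 4)) := by
  classical
  intro s i hi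
  set δ : ℝ := 2 ^ i / 4 with hδ
  have hδpos : 0 < δ := by positivity
  set B : ℝ := dist u v / δ with hB
  have hB0 : 0 ≤ B := div_nonneg dist_nonneg hδpos.le
  set G := Finset.univ.filter (fun σ : Equiv.Perm (Fin k) =>
        ∀ t, t < s → σ.symm s < σ.symm t) with hG
  set E : Equiv.Perm (Fin k) → Set (ℝ × ℝ) := fun σ =>
    {p : ℝ × ℝ | p.1 ∈ Set.Ico (0 : ℝ) 1 ∧ p.2 ∈ Set.Ico (1 : ℝ) 2 ∧
        CutsV hk r P σ p.1 p.2 m s i u v} with hE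
  set a : ℝ := min (dist r u) (dist r v) / δ with ha
  set b : ℝ := max (dist r u) (dist r v) / δ with hb
  have hab : a ≤ b := by
    apply div_le_div_of_nonneg_right ?_ hδpos.le |>.trans_eq rfl
    exact min_le_max
  have hbaB : b - a ≤ B := by
    rw [ha, hb, hB, div_sub_div_same]
    apply div_le_div_of_nonneg_right ?_ hδpos.le |>.trans_eq rfl
    rw [max_sub_min_eq_abs, abs_sub_comm]
    calc |dist r u - dist r v| = |dist u r - dist v r| := by rw [dist_comm r u, dist_comm r v]
      _ ≤ dist u v := abs_dist_sub_le u v r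
  -- per-σ bounds
  have hEbound : ∀ σ : Equiv.Perm (Fin k), (volume (E σ)).toReal ≤ B := by
    intro σ
    have hsub : E σ ⊆ {α : ℝ | α ∈ Set.Ico (0:ℝ) 1 ∧
        ∃ n : ℤ, a < n + α ∧ (n : ℝ) + α ≤ b} ×ˢ Set.Ico (1:ℝ) 2 := by
      rintro ⟨α, β⟩ ⟨hα, hβ, hc⟩
      exact ⟨⟨hα, cutsV_alpha hk r P σ α β m s i u v hi hα.1 hα.2 hc⟩, hβ⟩
    have hvol : volume (E σ) ≤ ENNReal.ofReal B := by
      calc volume (E σ) ≤ _ := measure_mono hsub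
        _ = volume {α : ℝ | α ∈ Set.Ico (0:ℝ) 1 ∧
              ∃ n : ℤ, a < n + α ∧ (n : ℝ) + α ≤ b} * volume (Set.Ico (1:ℝ) 2) := by
            rw [MeasureTheory.Measure.volume_eq_prod, MeasureTheory.Measure.prod_prod]
        _ ≤ ENNReal.ofReal (b - a) * 1 := by
            gcongr
            · exact fract_measure a b hab
            · simp [Real.volume_Ico]; norm_num
        _ ≤ ENNReal.ofReal B := by rw [mul_one]; exact ENNReal.ofReal_le_ofReal hbaB
    calc (volume (E σ)).toReal ≤ (ENNReal.ofReal B).toReal :=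
          ENNReal.toReal_mono (by simp) hvol
      _ = B := ENNReal.toReal_ofReal hB0
  have hEempty : ∀ σ : Equiv.Perm (Fin k), σ ∉ G → E σ = ∅ := by
    intro σ hσ
    rw [Set.eq_empty_iff_forall_notMem]
    rintro ⟨α, β⟩ ⟨hα, hβ, hc⟩
    exact hσ (Finset.mem_filter.2 ⟨Finset.mem_univ _, cutsV_perm hk r P σ α β m s i u v hr hord hc⟩)
  -- sum bound
  have hsum : ∑ σ : Equiv.Perm (Fin k), (volume (E σ)).toReal ≤ G.card * B := by
    calc ∑ σ : Equiv.Perm (Fin k), (volume (E σ)).toReal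
        ≤ ∑ σ : Equiv.Perm (Fin k), (if σ ∈ G then B else 0) := by
          apply Finset.sum_le_sum
          intro σ _
          by_cases hσ : σ ∈ G
          · simpa [hσ] using hEbound σ
          · simp [hσ, hEempty σ hσ]
      _ = G.card * B := by rw [Finset.sum_ite_mem, Finset.univ_inter, Finset.sum_const,
            nsmul_eq_mul]
  -- counting
  have hcount : ((s : ℕ) + 1) * G.card ≤ Fintype.card (Equiv.Perm (Fin k)) := by
    have := perm_count (s := s)
    rwa [Fin.card_Iic] at this
  have hN : (0 : ℝ) < (Fintype.card (Equiv.Perm (Fin k)) : ℝ) := by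
    exact_mod_cast Fintype.card_pos
  have hGle : (G.card : ℝ) ≤ (Fintype.card (Equiv.Perm (Fin k)) : ℝ) / ((s : ℕ) + 1 : ℝ) := by
    rw [le_div_iff₀ (by positivity)]
    calc (G.card : ℝ) * ((s:ℕ) + 1 : ℝ) = (((s:ℕ) + 1) * G.card : ℕ) := by push_cast; ring
      _ ≤ _ := by exact_mod_cast hcount
  -- conclude
  unfold PrCutV
  rw [div_le_iff₀ hN]
  calc ∑ σ : Equiv.Perm (Fin k), (volume (E σ)).toReal ≤ G.card * B := hsum
    _ ≤ ((Fintype.card (Equiv.Perm (Fin k)) : ℝ) / ((s : ℕ) + 1 : ℝ)) * B := by gcongr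
    _ = 1 / ((s : ℕ) + 1 : ℝ) * (dist u v / δ) * (Fintype.card (Equiv.Perm (Fin k)) : ℝ) := by
        rw [hB]; field_simp
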